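/- Every nontrivial element of a free group is contained in a unique maximal infinite cyclic subgroup; equivalently, for every g ≠ 1 in a free group there is an element h and an integer n ≥ 1 with g = h^n such that any element whose some nonzero power equals a power of g lies in the cyclic group generated by h. -/

import Mathlib

open Subgroup

open Classical in
/-- Exponent-sum homomorphism on an abstract free group. -/
noncomputable def expSumG (G : Type*) [Group G] [IsFreeGroup G]
    (a : IsFreeGroup.Generators G) : G →* Multiplicative ℤ :=
  IsFreeGroup.lift fun i => Multiplicative.ofAdd (if i = a then (1:ℤ) else 0)

lemma expSumG_of (G : Type*) [Group G] [IsFreeGroup G] (a : IsFreeGroup.Generators G) :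
    expSumG G a (IsFreeGroup.of a) = Multiplicative.ofAdd 1 := by
  rw [expSumG, IsFreeGroup.lift_of, if_pos rfl]

/-- Every element of the free group on an empty type is trivial. -/
lemma freeGroup_isEmpty_eq_one {ι : Type*} [IsEmpty ι] (u : FreeGroup ι) : u = 1 := by
  induction u using FreeGroup.induction_on with
  | C1 => rfl
  | of x => exact isEmptyElim x
  | inv_of x _ => exact isEmptyElim x
  | mul x y hx hy => rw [hx, hy, one_mul]

/-- Free groups are torsion-free (in fact: nonzero integer powers of nontrivial
elements are nontrivial). -/
lemma freeGroup_zpow_ne_one {G : Type*} [Group G] [IsFreeGroup G] {x : G} (hx : x ≠ 1)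
    {q : ℤ} (hq : q ≠ 0) : x ^ q ≠ 1 := by
  intro h
  set H : Subgroup G := Subgroup.zpowers x with hH
  -- every element of H satisfies y ^ q = 1
  have hyq : ∀ y : H, y ^ q = 1 := by
    rintro ⟨y, hy⟩
    obtain ⟨k, hk⟩ := Subgroup.mem_zpowers_iff.mp hy
    ext
    push_cast
    rw [← hk, ← zpow_mul, mul_comm, zpow_mul, h, one_zpow]
  rcases isEmpty_or_nonempty (IsFreeGroup.Generators H) with hE | ⟨⟨a⟩⟩
  · -- H is free on the empty set, hence trivial, contradicting x ∈ H, x ≠ 1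
    have : (⟨x, Subgroup.mem_zpowers x⟩ : H) = 1 := by
      have := freeGroup_isEmpty_eq_one (IsFreeGroup.toFreeGroup H ⟨x, Subgroup.mem_zpowers x⟩)
      have h2 := congrArg (IsFreeGroup.toFreeGroup H).symm this
      simpa using h2
    exact hx (by simpa using congrArg Subtype.val this)
  · have h1 : expSumG H a ((IsFreeGroup.of a : H) ^ q) = 1 := by rw [hyq, map_one]
    rw [map_zpow, expSumG_of] at h1
    have := congrArg Multiplicative.toAdd h1
    rw [Int.toAdd_zpow] at this
    simp at this
    exact hq this

/-- The free group on a subsingleton is cyclic. -/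
lemma freeGroup_subsingleton_cyclic {ι : Type*} [Subsingleton ι] :
    ∃ c : FreeGroup ι, ∀ u : FreeGroup ι, ∃ i : ℤ, u = c ^ i := by
  rcases isEmpty_or_nonempty ι with hE | ⟨⟨a⟩⟩
  · exact ⟨1, fun u => ⟨0, by simpa using freeGroup_isEmpty_eq_one u⟩⟩
  · refine ⟨FreeGroup.of a, fun u => ?_⟩
    induction u using FreeGroup.induction_on with
    | C1 => exact ⟨0, by simp⟩
    | of x => exact ⟨1, by rw [Subsingleton.elim x a]; simp⟩
    | inv_of x hx => obtain ⟨i, hi⟩ := hx; exact ⟨-i, by rw [hi, zpow_neg]⟩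
    | mul x y hx hy =>
      obtain ⟨i, hi⟩ := hx; obtain ⟨j, hj⟩ := hy
      exact ⟨i + j, by rw [hi, hj, zpow_add]⟩

/-- A commutative free group is cyclic. -/
lemma cyclic_of_comm (G : Type*) [Group G] [IsFreeGroup G]
    (hc : ∀ x y : G, x * y = y * x) :
    ∃ c : G, ∀ x : G, ∃ i : ℤ, x = c ^ i := by
  classical
  have hsub : Subsingleton (IsFreeGroup.Generators G) := by
    constructor
    intro a b
    by_contra hab
    obtain ⟨s, t, hst⟩ : ∃ s t : Equiv.Perm (Fin 3), s * t ≠ t * s := by decide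
    set F := IsFreeGroup.lift (fun i : IsFreeGroup.Generators G => if i = a then s else t)
    have h1 : F (IsFreeGroup.of a) = s := by rw [IsFreeGroup.lift_of, if_pos rfl]
    have h2 : F (IsFreeGroup.of b) = t := by rw [IsFreeGroup.lift_of, if_neg (Ne.symm hab)]
    have := congrArg F (hc (IsFreeGroup.of a) (IsFreeGroup.of b))
    rw [map_mul, map_mul, h1, h2] at this
    exact hst this
  obtain ⟨c', hc'⟩ := freeGroup_subsingleton_cyclic (ι := IsFreeGroup.Generators G)
  set e := IsFreeGroup.toFreeGroup G
  refine ⟨e.symm c', fun x => ?_⟩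
  obtain ⟨i, hi⟩ := hc' (e x)
  exact ⟨i, by rw [← map_zpow, ← hi, MulEquiv.symm_apply_apply]⟩

/-- The closure of two commuting elements is commutative. -/
lemma closure_pair_comm {G : Type*} [Group G] {x y : G} (h : x * y = y * x) :
    ∀ u ∈ closure {x, y}, ∀ v ∈ closure {x, y}, u * v = v * u := by
  have step1 : closure {x, y} ≤ centralizer {x, y} := by
    rw [closure_le]
    rintro s (rfl | rfl) <;>
      · intro g hg
        rcases hg with rfl | rfl <;> first | rfl | exact h | exact h.symm
  intro u hu v hv
  have hS : {x, y} ⊆ (centralizer {u} : Set G) := by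
    intro s hs
    rw [SetLike.mem_coe, mem_centralizer_iff]
    rintro g rfl
    exact (step1 hu s hs).symm
  have := (closure_le _).mpr hS hv
  rw [mem_centralizer_iff] at this
  exact this u rfl

open Classical in
/-- Exponent-sum homomorphism on a concrete free group. -/
noncomputable def expSumF {α : Type*} (a : α) : FreeGroup α →* Multiplicative ℤ :=
  FreeGroup.lift fun i => Multiplicative.ofAdd (if i = a then (1:ℤ) else 0)

lemma expSumF_of {α : Type*} (a : α) :
    expSumF a (FreeGroup.of a) = Multiplicative.ofAdd 1 := by
  rw [expSumF, FreeGroup.lift_apply_of, if_pos rfl]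

lemma expSumF_of_ne {α : Type*} {a b : α} (h : b ≠ a) : expSumF a (FreeGroup.of b) = 1 := by
  rw [expSumF, FreeGroup.lift_apply_of, if_neg h]; rfl

/-- Two commuting elements of a free group are powers of a common element. -/
lemma comm_mem_common_zpowers {α : Type*} {x y : FreeGroup α} (h : x * y = y * x) :
    ∃ c : FreeGroup α, (∃ i : ℤ, x = c ^ i) ∧ (∃ j : ℤ, y = c ^ j) := by
  have hK := closure_pair_comm h
  have hcomm : ∀ u v : closure {x, y}, u * v = v * u := fun u v =>
    Subtype.ext (hK u u.2 v v.2)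
  obtain ⟨c, hc⟩ := cyclic_of_comm (closure {x, y}) hcomm
  have hx : x ∈ closure {x, y} := subset_closure (by simp)
  have hy : y ∈ closure {x, y} := subset_closure (by simp)
  obtain ⟨i, hi⟩ := hc ⟨x, hx⟩
  obtain ⟨j, hj⟩ := hc ⟨y, hy⟩
  exact ⟨↑c, ⟨i, by simpa using congrArg Subtype.val hi⟩,
    ⟨j, by simpa using congrArg Subtype.val hj⟩⟩

/-- A free group on at least two generators has trivial center. -/
lemma freeGroup_center_eq_one {ι : Type*} {z : FreeGroup ι} (hz : ∀ u, z * u = u * z)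
    {a b : ι} (hab : a ≠ b) : z = 1 := by
  classical
  have key : ∀ t : ι, ∃ p : ℤ, z = FreeGroup.of t ^ p := by
    intro t
    obtain ⟨c, ⟨i, hi⟩, ⟨j, hj⟩⟩ := comm_mem_common_zpowers (hz (FreeGroup.of t))
    have h1 : (expSumF t) (FreeGroup.of t) = Multiplicative.ofAdd 1 := expSumF_of t
    rw [hj, map_zpow] at h1
    have h2 := congrArg Multiplicative.toAdd h1
    rw [Int.toAdd_zpow] at h2
    simp only [toAdd_ofAdd] at h2
    have hu : IsUnit j := IsUnit.of_mul_eq_one _ (by rw [mul_comm]; exact h2)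
    rcases Int.isUnit_iff.mp hu with rfl | rfl
    · exact ⟨i, by rw [hi, hj, zpow_one]⟩
    · refine ⟨-i, ?_⟩
      have hc : c = (FreeGroup.of t)⁻¹ := by
        rw [hj]; simp
      rw [hi, hc, inv_zpow, ← zpow_neg]
  obtain ⟨p, hp⟩ := key a
  obtain ⟨q, hq⟩ := key b
  have h1 : expSumF b z = 1 := by
    rw [hp, map_zpow, expSumF_of_ne hab, one_zpow]
  have h2 : expSumF b z = Multiplicative.ofAdd q := by
    rw [hq, map_zpow, expSumF_of]
    apply Multiplicative.toAdd.injective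
    rw [Int.toAdd_zpow]; simp
  rw [h1] at h2
  have : q = 0 := by
    have := congrArg Multiplicative.toAdd h2
    simpa using this.symm
  rw [hq, this, zpow_zero]

/-- A free group with nontrivial center is commutative. -/
lemma comm_of_center (G : Type*) [Group G] [IsFreeGroup G] {z : G}
    (hz : ∀ u : G, z * u = u * z) (hz1 : z ≠ 1) (x y : G) : x * y = y * x := by
  classical
  set e := IsFreeGroup.toFreeGroup G with he
  have hwc : ∀ u : FreeGroup (IsFreeGroup.Generators G), e z * u = u * e z := by
    intro u
    have h0 := congrArg e (hz (e.symm u))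
    simpa [map_mul] using h0
  by_cases hss : ∀ a b : IsFreeGroup.Generators G, a = b
  · haveI : Subsingleton (IsFreeGroup.Generators G) := ⟨hss⟩
    obtain ⟨c', hc'⟩ := freeGroup_subsingleton_cyclic (ι := IsFreeGroup.Generators G)
    obtain ⟨i, hi⟩ := hc' (e x)
    obtain ⟨j, hj⟩ := hc' (e y)
    apply e.injective
    rw [map_mul, map_mul, hi, hj, ← zpow_add, ← zpow_add, add_comm]
  · push_neg at hss
    obtain ⟨a, b, hab⟩ := hss
    have : e z = 1 := freeGroup_center_eq_one hwc hab
    exact absurd (e.injective (by rw [this, map_one])) hz1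

/-- The centralizer of any nontrivial element of a free group is commutative. -/
lemma centralizer_comm {α : Type*} {w : FreeGroup α} (hw : w ≠ 1) :
    ∀ x ∈ centralizer ({w} : Set (FreeGroup α)),
      ∀ y ∈ centralizer ({w} : Set (FreeGroup α)), x * y = y * x := by
  have hwZ : w ∈ centralizer ({w} : Set (FreeGroup α)) :=
    mem_centralizer_iff.mpr (by rintro g rfl; rfl)
  set Z := centralizer ({w} : Set (FreeGroup α)) with hZ
  have hzc : ∀ u : Z, (⟨w, hwZ⟩ : Z) * u = u * ⟨w, hwZ⟩ := by
    rintro ⟨u, hu⟩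
    have := mem_centralizer_iff.mp hu w rfl
    exact Subtype.ext (by simpa using this)
  have hz1 : (⟨w, hwZ⟩ : Z) ≠ 1 := by
    intro h0
    exact hw (by simpa using congrArg Subtype.val h0)
  intro x hx y hy
  have := comm_of_center Z hzc hz1 ⟨x, hx⟩ ⟨y, hy⟩
  simpa using congrArg Subtype.val this

/-- The centralizer of any nontrivial element of a free group is cyclic. -/
lemma centralizer_cyclic {α : Type*} {w : FreeGroup α} (hw : w ≠ 1) :
    ∃ c : FreeGroup α, ∀ x ∈ centralizer ({w} : Set (FreeGroup α)), ∃ i : ℤ, x = c ^ i := by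
  obtain ⟨c, hc⟩ := cyclic_of_comm (centralizer ({w} : Set (FreeGroup α)))
    (fun u v => Subtype.ext (centralizer_comm hw u u.2 v v.2))
  refine ⟨↑c, fun x hx => ?_⟩
  obtain ⟨i, hi⟩ := hc ⟨x, hx⟩
  exact ⟨i, by simpa using congrArg Subtype.val hi⟩

theorem unique_maximal_infinite_cyclic {α : Type*}
    (g : FreeGroup α) (hg : g ≠ 1) :
    ∃ (h : FreeGroup α) (n : ℕ), 1 ≤ n ∧ g = h ^ n ∧
      ∀ x : FreeGroup α,
        (∃ m : ℤ, m ≠ 0 ∧ ∃ k : ℤ, x ^ m = g ^ k) →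
        ∃ i : ℤ, x = h ^ i := by
  obtain ⟨c, hc⟩ := centralizer_cyclic hg
  have hgZ : g ∈ Subgroup.centralizer ({g} : Set (FreeGroup α)) :=
    Subgroup.mem_centralizer_iff.mpr (by rintro y rfl; rfl)
  obtain ⟨j, hj⟩ := hc g hgZ
  have hj0 : j ≠ 0 := by rintro rfl; exact hg (by simpa using hj)
  -- the key membership statement
  have main : ∀ x : FreeGroup α,
      (∃ m : ℤ, m ≠ 0 ∧ ∃ k : ℤ, x ^ m = g ^ k) → ∃ i : ℤ, x = c ^ i := by
    rintro x ⟨m, hm, k, hxk⟩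
    by_cases hk : k = 0
    · subst hk
      rw [zpow_zero] at hxk
      have hx1 : x = 1 := by
        by_contra hx1
        exact freeGroup_zpow_ne_one hx1 hm hxk
      exact ⟨0, by rw [hx1, zpow_zero]⟩
    · have hw : g ^ k ≠ 1 := freeGroup_zpow_ne_one hg hk
      have hxZ : x ∈ Subgroup.centralizer ({g ^ k} : Set (FreeGroup α)) := by
        rw [Subgroup.mem_centralizer_iff]
        rintro y rfl
        rw [← hxk]
        exact ((Commute.refl x).zpow_left m).eq
      have hgZ' : g ∈ Subgroup.centralizer ({g ^ k} : Set (FreeGroup α)) := by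
        rw [Subgroup.mem_centralizer_iff]
        rintro y rfl
        exact ((Commute.refl g).zpow_left k).eq
      have hcomm : x * g = g * x := centralizer_comm hw x hxZ g hgZ'
      exact hc x (Subgroup.mem_centralizer_iff.mpr (by rintro y rfl; exact hcomm.symm))
  rcases hj0.lt_or_gt with hneg | hpos
  · refine ⟨c⁻¹, (-j).toNat, ?_, ?_, ?_⟩
    · omega
    · rw [hj, inv_pow, ← zpow_natCast, Int.toNat_of_nonneg (by omega), ← zpow_neg, neg_neg]
    · intro x hx
      obtain ⟨i, hi⟩ := main x hx
      exact ⟨-i, by rw [hi, inv_zpow, ← zpow_neg, neg_neg]⟩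
  · refine ⟨c, j.toNat, ?_, ?_, ?_⟩
    · omega
    · rw [hj, ← zpow_natCast, Int.toNat_of_nonneg (by omega)]
    · exact fun x hx => main x hx
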